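/- Let n be a positive integer and let P be a real polynomial such that P^{(2j-1)}(0) = 0 for 1 ≤ j ≤ n−1, P^{(2n-1)}(0) = (−1)^n, P^{(2j-1)}(π) = 0 for 1 ≤ j ≤ n, and deg P ≤ 2n. Then for every positive integer k, ∫_0^π P(x) cos(k x) dx = 1/k^{2n}. -/

import Mathlib

open Polynomial

private lemma hasDerivAt_sin_div (k : ℝ) (hk : k ≠ 0) (x : ℝ) :
    HasDerivAt (fun x => Real.sin (k * x) / k) (Real.cos (k * x)) x := by
  have h : HasDerivAt (fun x => Real.sin (k * x)) (Real.cos (k * x) * k) x := by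
    exact ((Real.hasDerivAt_sin (k * x)).comp x ((hasDerivAt_id x).const_mul k)).congr_deriv (by ring)
  have := h.div_const k
  simpa [mul_div_assoc, mul_div_cancel_right₀ _ hk] using this

private lemma hasDerivAt_neg_cos_div (k : ℝ) (hk : k ≠ 0) (x : ℝ) :
    HasDerivAt (fun x => -Real.cos (k * x) / k ^ 2) (Real.sin (k * x) / k) x := by
  have h : HasDerivAt (fun x => -Real.cos (k * x)) (Real.sin (k * x) * k) x := by
    exact ((Real.hasDerivAt_cos (k * x)).comp x ((hasDerivAt_id x).const_mul k)).neg.congr_deriv (by ring)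
  have := h.div_const (k ^ 2)
  exact this.congr_deriv (by
    rw [div_eq_div_iff (pow_ne_zero 2 hk) hk]
    ring)

private lemma cont_cos (k : ℝ) : Continuous fun x : ℝ => Real.cos (k * x) :=
  Real.continuous_cos.comp (continuous_const.mul continuous_id)

private lemma cont_sin_div (k : ℝ) : Continuous fun x : ℝ => Real.sin (k * x) / k :=
  ((Real.continuous_sin.comp (continuous_const.mul continuous_id)).div_const k)

private lemma step (k : ℕ) (hk : 0 < k) (Q : Polynomial ℝ) :
    ∫ x in (0:ℝ)..Real.pi, Q.eval x * Real.cos (k * x)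
      = ((derivative Q).eval Real.pi * Real.cos (k * Real.pi)
          - (derivative Q).eval 0) / (k : ℝ) ^ 2
        - (1 / (k : ℝ) ^ 2) *
          ∫ x in (0:ℝ)..Real.pi, (derivative (derivative Q)).eval x * Real.cos (k * x) := by
  have hk' : (k : ℝ) ≠ 0 := Nat.cast_ne_zero.mpr hk.ne'
  have ibp1 := intervalIntegral.integral_mul_deriv_eq_deriv_mul
    (u := fun x => Q.eval x) (u' := fun x => (derivative Q).eval x)
    (v := fun x => Real.sin ((k : ℝ) * x) / k) (v' := fun x => Real.cos ((k : ℝ) * x))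
    (fun x _ => Q.hasDerivAt x) (fun x _ => hasDerivAt_sin_div (k : ℝ) hk' x)
    ((derivative Q).continuous_aeval.intervalIntegrable 0 Real.pi)
    ((cont_cos (k : ℝ)).intervalIntegrable 0 Real.pi)
  have ibp2 := intervalIntegral.integral_mul_deriv_eq_deriv_mul
    (u := fun x => (derivative Q).eval x)
    (u' := fun x => (derivative (derivative Q)).eval x)
    (v := fun x => -Real.cos ((k : ℝ) * x) / (k : ℝ) ^ 2)
    (v' := fun x => Real.sin ((k : ℝ) * x) / k)
    (fun x _ => (derivative Q).hasDerivAt x)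
    (fun x _ => hasDerivAt_neg_cos_div (k : ℝ) hk' x)
    ((derivative (derivative Q)).continuous_aeval.intervalIntegrable 0 Real.pi)
    ((cont_sin_div (k : ℝ)).intervalIntegrable 0 Real.pi)
  have hsin : Real.sin ((k : ℝ) * Real.pi) = 0 := Real.sin_nat_mul_pi k
  have h3 : ∫ x in (0:ℝ)..Real.pi,
      (derivative (derivative Q)).eval x * (-Real.cos ((k : ℝ) * x) / (k : ℝ) ^ 2)
      = (-1 / (k : ℝ) ^ 2) *
        ∫ x in (0:ℝ)..Real.pi, (derivative (derivative Q)).eval x * Real.cos ((k : ℝ) * x) := by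
    rw [← intervalIntegral.integral_const_mul]
    congr 1
    ext x
    ring
  rw [ibp1, ibp2, h3]
  simp only [hsin, Real.sin_zero, zero_div, mul_zero, zero_mul, zero_sub]
  field_simp
  simp only [Real.cos_zero, mul_one]
  try ring

private lemma iterQ (P : Polynomial ℝ) (a : ℕ) :
    derivative^[a] (-(derivative (derivative P))) = -(derivative^[a + 2] P) := by
  rw [iterate_derivative_neg]
  congr 1

theorem int_P_cos (n : ℕ) (hn : 0 < n) (P : Polynomial ℝ)
    (h0 : ∀ j, 1 ≤ j → j ≤ n - 1 → (Polynomial.derivative^[2 * j - 1] P).eval 0 = 0)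
    (h0n : (Polynomial.derivative^[2 * n - 1] P).eval 0 = (-1 : ℝ) ^ n)
    (hπ : ∀ j, 1 ≤ j → j ≤ n → (Polynomial.derivative^[2 * j - 1] P).eval Real.pi = 0)
    (hdeg : P.natDegree ≤ 2 * n) :
    ∀ k : ℕ, 0 < k →
      ∫ x in (0:ℝ)..Real.pi, P.eval x * Real.cos (k * x) = 1 / (k : ℝ) ^ (2 * n) := by
  induction n generalizing P with
  | zero => exact absurd hn (by simp)
  | succ m ih =>
    intro k hk
    have hk' : (k : ℝ) ≠ 0 := Nat.cast_ne_zero.mpr hk.ne'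
    have key := step k hk P
    have hP'π : (derivative P).eval Real.pi = 0 := by
      have h1 := hπ 1 le_rfl (by omega)
      norm_num at h1
      exact h1
    rcases Nat.eq_zero_or_pos m with hm | hm
    · -- base case n = 1
      subst hm
      have hP'0 : (derivative P).eval 0 = -1 := by
        have h1 := h0n
        norm_num at h1
        exact h1
      have hdd : derivative (derivative P) = C ((derivative (derivative P)).coeff 0) := by
        apply Polynomial.eq_C_of_natDegree_le_zero
        have a := Polynomial.natDegree_derivative_le (R := ℝ) (p := derivative P)
        have b := Polynomial.natDegree_derivative_le (R := ℝ) (p := P)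
        omega
      have hzero : ∫ x in (0:ℝ)..Real.pi,
          (derivative (derivative P)).eval x * Real.cos ((k : ℝ) * x) = 0 := by
        rw [hdd]
        simp only [eval_C]
        rw [intervalIntegral.integral_const_mul]
        have : ∫ x in (0:ℝ)..Real.pi, Real.cos ((k : ℝ) * x)
            = Real.sin ((k : ℝ) * Real.pi) / k - Real.sin ((k : ℝ) * 0) / k := by
          apply intervalIntegral.integral_eq_sub_of_hasDerivAt
            (fun x _ => hasDerivAt_sin_div (k : ℝ) hk' x)
          exact (cont_cos (k : ℝ)).intervalIntegrable 0 Real.pi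
        rw [this, Real.sin_nat_mul_pi]
        simp
      rw [key, hP'π, hP'0, hzero]
      norm_num
    · -- inductive case, m ≥ 1
      have hP'0 : (derivative P).eval 0 = 0 := by
        have h1 := h0 1 le_rfl (by omega)
        norm_num at h1
        exact h1
      set Q : Polynomial ℝ := -(derivative (derivative P)) with hQdef
      have h0' : ∀ j, 1 ≤ j → j ≤ m - 1 → (derivative^[2 * j - 1] Q).eval 0 = 0 := by
        intro j hj1 hj2
        have h := h0 (j + 1) (by omega) (by omega)
        rw [hQdef, iterQ, show 2 * j - 1 + 2 = 2 * (j + 1) - 1 by omega]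
        simp [h]
      have h0n' : (derivative^[2 * m - 1] Q).eval 0 = (-1 : ℝ) ^ m := by
        rw [hQdef, iterQ, show 2 * m - 1 + 2 = 2 * (m + 1) - 1 by omega]
        simp only [eval_neg, h0n, pow_succ]
        ring
      have hπ' : ∀ j, 1 ≤ j → j ≤ m → (derivative^[2 * j - 1] Q).eval Real.pi = 0 := by
        intro j hj1 hj2
        have h := hπ (j + 1) (by omega) (by omega)
        rw [hQdef, iterQ, show 2 * j - 1 + 2 = 2 * (j + 1) - 1 by omega]
        simp [h]
      have hdeg' : Q.natDegree ≤ 2 * m := by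
        rw [hQdef, natDegree_neg]
        have a := Polynomial.natDegree_derivative_le (R := ℝ) (p := derivative P)
        have b := Polynomial.natDegree_derivative_le (R := ℝ) (p := P)
        omega
      have hQint := ih hm Q h0' h0n' hπ' hdeg' k hk
      have hPP : ∫ x in (0:ℝ)..Real.pi,
          (derivative (derivative P)).eval x * Real.cos ((k : ℝ) * x)
          = -(1 / (k : ℝ) ^ (2 * m)) := by
        rw [hQdef] at hQint
        simp only [eval_neg, neg_mul, intervalIntegral.integral_neg] at hQint
        linarith
      rw [key, hP'π, hP'0, hPP]
      rw [show 2 * (m + 1) = 2 * m + 2 by ring, pow_add]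
      field_simp
      ring
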